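/- Let $\chi^2_k$ be a chi-squared random variable with $k$ degrees of freedom and let $0 < \gamma < k$. Then $\mathbb{P}\left[\chi^2_k \geq \gamma\right] \geq 1 - e^{-\frac{(k-\gamma)^2}{4k}}$. -/

import Mathlib

open MeasureTheory ProbabilityTheory
open Real
open scoped ENNReal NNReal

lemma key_log {u : ℝ} (hu : 0 < u) (hu1 : u ≤ 1) :
    Real.log u + (1 - u) + (1 - u)^2 / 2 ≤ 0 := by
  set f : ℝ → ℝ := fun x => Real.log x + (1 - x) + (1 - x)^2 / 2 with hf
  have hderiv : ∀ x ∈ Set.Ioo u 1, HasDerivAt f ((x-1)^2 / x) x := by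
    intro x hx
    have hx0 : 0 < x := lt_trans hu hx.1
    have h1 : HasDerivAt Real.log x⁻¹ x := Real.hasDerivAt_log hx0.ne'
    have h2 : HasDerivAt (fun x : ℝ => 1 - x) (-1) x := by
      simpa using (hasDerivAt_id x).const_sub 1
    have h3 : HasDerivAt (fun x : ℝ => (1 - x)^2 / 2) ((x - 1)) x := by
      have := ((h2.pow 2).div_const 2)
      exact this.congr_deriv (by ring)
    have := (h1.add h2).add h3
    exact this.congr_deriv (by field_simp; ring)
  have hmono : MonotoneOn f (Set.Icc u 1) := by
    apply monotoneOn_of_deriv_nonneg (convex_Icc u 1)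
    · apply ContinuousOn.add
      apply ContinuousOn.add
      · exact Real.continuousOn_log.mono (by
          intro x hx
          simp only [Set.mem_compl_iff, Set.mem_singleton_iff]
          exact (lt_of_lt_of_le hu hx.1).ne')
      · fun_prop
      · fun_prop
    · intro x hx
      rw [interior_Icc] at hx
      exact (hderiv x hx).differentiableAt.differentiableWithinAt
    · intro x hx
      rw [interior_Icc] at hx
      rw [(hderiv x hx).deriv]
      exact div_nonneg (sq_nonneg _) (lt_trans hu hx.1).le
  have h1 : f u ≤ f 1 := by
    rcases eq_or_lt_of_le hu1 with h | h
    · rw [h]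
    · exact hmono (Set.mem_Icc.2 ⟨le_refl u, hu1⟩) (Set.mem_Icc.2 ⟨hu1, le_refl 1⟩) hu1
  simpa [hf] using h1

lemma gauss_pdf_integral {s : ℝ} (hs : s < 1/2) :
    ∫ x : ℝ, gaussianPDFReal 0 1 x * Real.exp (s * x^2) = (Real.sqrt (1 - 2*s))⁻¹ := by
  have hb : (0:ℝ) < 1/2 - s := by linarith
  have h1 : ∀ x : ℝ, gaussianPDFReal 0 1 x * Real.exp (s * x^2)
      = (Real.sqrt (2 * π))⁻¹ * Real.exp (-(1/2 - s) * x^2) := by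
    intro x
    simp only [gaussianPDFReal, NNReal.coe_one, mul_one, sub_zero]
    rw [mul_assoc, ← Real.exp_add]
    congr 1
    ring
  simp_rw [h1]
  rw [integral_const_mul, integral_gaussian]
  rw [Real.sqrt_div' π (by positivity)]
  have hπ : (0:ℝ) < Real.sqrt π := Real.sqrt_pos.2 pi_pos
  have hbb : (0:ℝ) < Real.sqrt (1/2 - s) := Real.sqrt_pos.2 hb
  have h2 : Real.sqrt (1 - 2*s) = Real.sqrt 2 * Real.sqrt (1/2 - s) := by
    rw [← Real.sqrt_mul (by norm_num : (0:ℝ) ≤ 2)]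
    congr 1
    ring
  have h3 : Real.sqrt (2 * π) = Real.sqrt 2 * Real.sqrt π := Real.sqrt_mul (by norm_num) _
  have h4 : (0:ℝ) < Real.sqrt 2 := Real.sqrt_pos.2 (by norm_num)
  rw [h2, h3, mul_inv, div_eq_mul_inv]
  calc (Real.sqrt 2)⁻¹ * (Real.sqrt π)⁻¹ * (Real.sqrt π * (Real.sqrt (1/2-s))⁻¹)
      = ((Real.sqrt π)⁻¹ * Real.sqrt π) * ((Real.sqrt 2)⁻¹ * (Real.sqrt (1/2-s))⁻¹) := by ring
    _ = (Real.sqrt 2)⁻¹ * (Real.sqrt (1/2-s))⁻¹ := by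
        rw [inv_mul_cancel₀ hπ.ne', one_mul]
    _ = (Real.sqrt 2 * Real.sqrt (1/2-s))⁻¹ := (mul_inv _ _).symm

lemma mgf_sq_gauss {Ω : Type*} [MeasureSpace Ω] (X : Ω → ℝ) (hX : Measurable X)
    (hd : Measure.map X ℙ = gaussianReal 0 1) {s : ℝ} (hs : s < 1/2) :
    mgf (fun ω => (X ω)^2) ℙ s = (Real.sqrt (1 - 2*s))⁻¹ := by
  have hmg : AEStronglyMeasurable (fun x : ℝ => Real.exp (s * x^2)) (Measure.map X ℙ) := by
    exact ((measurable_id.pow_const 2).const_mul s).exp.aestronglyMeasurable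
  have h1 : mgf (fun ω => (X ω)^2) ℙ s = ∫ x : ℝ, Real.exp (s * x^2) ∂(Measure.map X ℙ) := by
    rw [mgf, integral_map hX.aemeasurable hmg]
  rw [h1, hd, gaussianReal_of_var_ne_zero 0 one_ne_zero]
  have hpdf : gaussianPDF 0 1 = fun x => ((Real.toNNReal (gaussianPDFReal 0 1 x) : ℝ≥0) : ℝ≥0∞) := by
    funext x; rfl
  rw [hpdf, integral_withDensity_eq_integral_smul ((measurable_gaussianPDFReal 0 1).real_toNNReal) _]
  rw [← gauss_pdf_integral hs]
  congr 1
  funext x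
  rw [NNReal.smul_def, smul_eq_mul, Real.coe_toNNReal _ (gaussianPDFReal_nonneg _ _ _)]

theorem stmt3 {Ω : Type*} [MeasureSpace Ω] [IsProbabilityMeasure (ℙ : Measure Ω)]
    (W : ℕ → Ω → ℝ) (hmeas : ∀ i, Measurable (W i))
    (hdist : ∀ i, Measure.map (W i) ℙ = gaussianReal 0 1)
    (hindep : iIndepFun (m := fun _ => Real.measurableSpace) W ℙ)
    (k : ℕ) (γ : ℝ) (hγ : 0 < γ) (hγk : γ < k) :
    ENNReal.ofReal (1 - Real.exp (-((k - γ) ^ 2 / (4 * k))))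
      ≤ ℙ {ω | γ ≤ ∑ i ∈ Finset.Icc 1 k, (W i ω) ^ 2} := by
  have hk : (0:ℝ) < k := hγ.trans hγk
  have hkγ : (0:ℝ) < (k:ℝ) - γ := sub_pos.2 hγk
  set X : ℕ → Ω → ℝ := fun i ω => (W i ω)^2 with hX
  have hXmeas : ∀ i, Measurable (X i) := fun i => (hmeas i).pow_const 2
  have hXindep : iIndepFun (m := fun _ => Real.measurableSpace) X ℙ :=
    hindep.comp (fun _ x => x^2) (fun _ => measurable_id.pow_const 2)
  set s : ℝ := -(((k:ℝ) - γ)/(2*γ)) with hs_def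
  have hs_neg : s ≤ 0 := neg_nonpos.2 (by positivity)
  have hs_lt : s < 1/2 := lt_of_le_of_lt hs_neg (by norm_num)
  have h1s : 1 - 2*s = (k:ℝ)/γ := by
    rw [hs_def]; field_simp; ring
  -- mgf of each term
  have hmgf_i : ∀ i, mgf (X i) ℙ s = Real.sqrt (γ/(k:ℝ)) := by
    intro i
    rw [hX]
    rw [mgf_sq_gauss (W i) (hmeas i) (hdist i) hs_lt, h1s, ← Real.sqrt_inv, inv_div]
  -- the sum
  set S : Ω → ℝ := ∑ i ∈ Finset.Icc 1 k, X i with hS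
  have hSmeas : Measurable S := by
    rw [hS]
    have := Finset.measurable_sum (Finset.Icc 1 k) (fun i _ => hXmeas i)
    convert this using 1
    funext ω; rw [Finset.sum_apply]
  have hSapply : ∀ ω, S ω = ∑ i ∈ Finset.Icc 1 k, (W i ω)^2 := by
    intro ω; rw [hS, Finset.sum_apply]
  have hSnonneg : ∀ ω, 0 ≤ S ω := by
    intro ω; rw [hSapply]; exact Finset.sum_nonneg fun i _ => sq_nonneg _
  -- integrability of exp (s * S)
  have h_int : Integrable (fun ω => Real.exp (s * S ω)) ℙ := by
    refine Integrable.mono' (integrable_const 1)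
      ((hSmeas.const_mul s).exp.aestronglyMeasurable) (ae_of_all _ fun ω => ?_)
    rw [Real.norm_eq_abs, abs_of_pos (Real.exp_pos _)]
    have : s * S ω ≤ 0 := mul_nonpos_of_nonpos_of_nonneg hs_neg (hSnonneg ω)
    calc Real.exp (s * S ω) ≤ Real.exp 0 := Real.exp_le_exp.2 this
      _ = 1 := Real.exp_zero
  -- mgf of the sum
  have hmgfS : mgf S ℙ s = (Real.sqrt (γ/(k:ℝ)))^k := by
    rw [hS, hXindep.mgf_sum hXmeas]
    rw [Finset.prod_congr rfl (fun i _ => hmgf_i i), Finset.prod_const, Nat.card_Icc]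
    norm_num
  -- Chernoff
  have hcher := measure_le_le_exp_mul_mgf (μ := ℙ) (X := S) γ hs_neg h_int
  rw [hmgfS] at hcher
  -- arithmetic bound
  set u : ℝ := γ/(k:ℝ) with hu_def
  have hu : 0 < u := by positivity
  have hu1 : u < 1 := (div_lt_one hk).2 hγk
  set a : ℝ := (1-u)/2 + (1-u)^2/4 with ha_def
  have hbase : Real.sqrt u * Real.exp a ≤ 1 := by
    have hsq : (Real.sqrt u * Real.exp a)^2 = u * Real.exp (Real.log u + 2*a) - (u * Real.exp (Real.log u + 2*a) - (Real.sqrt u * Real.exp a)^2) := by ring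
    have h2 : (Real.sqrt u * Real.exp a)^2 = u * Real.exp (2*a) := by
      rw [mul_pow, Real.sq_sqrt hu.le, ← Real.exp_nat_mul]
      norm_num
    have h3 : u * Real.exp (2*a) ≤ 1 := by
      have : u * Real.exp (2*a) = Real.exp (Real.log u + 2*a) := by
        rw [Real.exp_add, Real.exp_log hu]
      rw [this, ← Real.exp_zero]
      apply Real.exp_le_exp.2
      have := key_log hu hu1.le
      rw [ha_def]; nlinarith [this]
    nlinarith [Real.sqrt_nonneg u, Real.exp_pos a, h2, h3,
      sq_nonneg (Real.sqrt u * Real.exp a - 1)]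
  have hkey : Real.exp (-s*γ) * (Real.sqrt u)^k ≤ Real.exp (-(((k:ℝ) - γ)^2/(4*k))) := by
    have h5 : Real.sqrt u ≤ Real.exp (-a) := by
      have : Real.sqrt u = (Real.sqrt u * Real.exp a) * Real.exp (-a) := by
        rw [mul_assoc, ← Real.exp_add]; simp
      rw [this]
      calc (Real.sqrt u * Real.exp a) * Real.exp (-a) ≤ 1 * Real.exp (-a) :=
        mul_le_mul_of_nonneg_right hbase (Real.exp_pos _).le
        _ = Real.exp (-a) := one_mul _
    have h6 : (Real.sqrt u)^k ≤ Real.exp (-a)^k :=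
      pow_le_pow_left₀ (Real.sqrt_nonneg u) h5 k
    have h7 : Real.exp (-a)^k = Real.exp ((k:ℝ) * (-a)) := (Real.exp_nat_mul _ k).symm
    calc Real.exp (-s*γ) * (Real.sqrt u)^k
        ≤ Real.exp (-s*γ) * Real.exp ((k:ℝ) * (-a)) := by
          rw [← h7]; exact mul_le_mul_of_nonneg_left h6 (Real.exp_pos _).le
      _ = Real.exp (-s*γ + (k:ℝ)*(-a)) := (Real.exp_add _ _).symm
      _ = Real.exp (-(((k:ℝ) - γ)^2/(4*k))) := by
          congr 1
          rw [hs_def, ha_def, hu_def]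
          field_simp
          ring
  -- combine with Chernoff
  have hfin : (ℙ {ω | S ω ≤ γ}).toReal ≤ Real.exp (-(((k:ℝ) - γ)^2/(4*k))) :=
    hcher.trans hkey
  have hle : ℙ {ω | S ω ≤ γ} ≤ ENNReal.ofReal (Real.exp (-(((k:ℝ) - γ)^2/(4*k)))) := by
    rw [← ENNReal.ofReal_toReal (measure_ne_top ℙ _)]
    exact ENNReal.ofReal_le_ofReal hfin
  -- complement
  set A : Set Ω := {ω | γ ≤ S ω} with hA_def
  have hAmeas : MeasurableSet A := measurableSet_le measurable_const hSmeas
  have hAc : Aᶜ ⊆ {ω | S ω ≤ γ} := by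
    intro ω hω
    simp only [hA_def, Set.mem_compl_iff, Set.mem_setOf_eq, not_le] at hω
    exact le_of_lt hω
  have hAcle : ℙ Aᶜ ≤ ENNReal.ofReal (Real.exp (-(((k:ℝ) - γ)^2/(4*k)))) :=
    le_trans (measure_mono hAc) hle
  have hAcompl : ℙ Aᶜ = 1 - ℙ A := prob_compl_eq_one_sub hAmeas
  have hgoal_set : {ω | γ ≤ ∑ i ∈ Finset.Icc 1 k, (W i ω) ^ 2} = A := by
    ext ω; simp only [hA_def, Set.mem_setOf_eq, hSapply]
  rw [hgoal_set]
  have hAeq : ℙ A = 1 - ℙ Aᶜ := by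
    rw [hAcompl, ENNReal.sub_sub_cancel ENNReal.one_ne_top prob_le_one]
  rw [hAeq]
  have hofreal : ENNReal.ofReal (1 - Real.exp (-(((k:ℝ) - γ)^2/(4*k))))
      = 1 - ENNReal.ofReal (Real.exp (-(((k:ℝ) - γ)^2/(4*k)))) := by
    rw [ENNReal.ofReal_sub _ (Real.exp_pos _).le, ENNReal.ofReal_one]
  calc ENNReal.ofReal (1 - Real.exp (-(((k:ℝ) - γ) ^ 2 / (4 * k))))
      = 1 - ENNReal.ofReal (Real.exp (-(((k:ℝ) - γ)^2/(4*k)))) := hofreal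
    _ ≤ 1 - ℙ Aᶜ := tsub_le_tsub_left hAcle 1
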